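/- Let M1, M2 be integers with 4 ≤ M1 ≤ M2. Then the restricted sum Ṙ(M1,M2) = (1/(M1·M2)) · Σ_{i=1}^{M1−1} Σ_{j=1}^{M2−1} 1/(4 − 2·cos(2πi/M1) − 2·cos(2πj/M2)) satisfies Ṙ(M1,M2) ≤ (1/(2π))·log M2 + (2/π²)·(M1/M2) + 1/5, where log denotes the natural logarithm. -/

import Mathlib

open Real Finset

/-- The restricted average resistance sum `Ṙ(M1,M2)`: the part of the average effective
resistance of the toroidal grid `T_{M1,M2}` coming from eigenvalue indices with both
coordinates nonzero. -/
noncomputable def RaveRing (M1 M2 : ℕ) : ℝ :=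
  (1 / ((M1 : ℝ) * M2)) * ∑ i ∈ Finset.Icc 1 (M1 - 1), ∑ j ∈ Finset.Icc 1 (M2 - 1),
    1 / (4 - 2 * Real.cos (2 * Real.pi * i / M1) - 2 * Real.cos (2 * Real.pi * j / M2))

noncomputable def Hf (a φ : ℝ) : ℝ :=
  φ + 2 * arctan ((a - Real.sqrt (a^2-1)) * Real.sin φ /
      (1 - (a - Real.sqrt (a^2-1)) * Real.cos φ))

lemma hasDerivAt_poisson (a : ℝ) (ha : 1 < a) (x : ℝ) :
    HasDerivAt (Hf a) (Real.sqrt (a^2-1) / (a - Real.cos x)) x := by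
  unfold Hf
  set s := Real.sqrt (a^2-1) with hs
  have hs2 : s^2 = a^2 - 1 := Real.sq_sqrt (by nlinarith)
  have hspos : 0 < s := Real.sqrt_pos.2 (by nlinarith)
  set r := a - s with hrdef
  have hrpos : 0 < r := by
    have : s < a := by nlinarith [Real.sq_sqrt (show (0:ℝ) ≤ a^2-1 by nlinarith), Real.sqrt_nonneg (a^2-1)]
    simpa [hrdef] using sub_pos.2 this
  have hr1 : r < 1 := by nlinarith
  have hr2 : r^2 = 2*a*r - 1 := by simp only [hrdef]; nlinarith
  have hD : 0 < 1 - r * Real.cos x := by nlinarith [Real.neg_one_le_cos x, Real.cos_le_one x]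
  have hac : 0 < a - Real.cos x := by nlinarith [Real.cos_le_one x]
  have hu : HasDerivAt (fun φ : ℝ => r * Real.sin φ / (1 - r * Real.cos φ))
      ((r * Real.cos x * (1 - r * Real.cos x) - r * Real.sin x * (r * Real.sin x)) /
        (1 - r * Real.cos x)^2) x := by
    have h1 : HasDerivAt (fun φ : ℝ => r * Real.sin φ) (r * Real.cos x) x :=
      (Real.hasDerivAt_sin x).const_mul r
    have h2 : HasDerivAt (fun φ : ℝ => 1 - r * Real.cos φ) (r * Real.sin x) x := by
      have := ((Real.hasDerivAt_cos x).const_mul r).const_sub 1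
      simpa using this
    exact h1.div h2 hD.ne'
  have harc := hu.arctan
  have hfull := ((hasDerivAt_id x).add (harc.const_mul 2))
  convert hfull using 1
  · rfl
  · rfl
  · rfl
  have hsc := Real.sin_sq_add_cos_sq x
  have hkey : (1 - r * Real.cos x)^2 + (r * Real.sin x)^2 = 2*r*(a - Real.cos x) := by nlinarith
  have h1u : 1 + (r * Real.sin x / (1 - r * Real.cos x))^2
      = 2*r*(a - Real.cos x) / (1 - r * Real.cos x)^2 := by
    field_simp
    nlinarith
  rw [h1u]
  have hN : r * Real.cos x * (1 - r * Real.cos x) - r * Real.sin x * (r * Real.sin x)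
      = r * (Real.cos x - r) := by nlinarith
  rw [hN]
  have hsr : s = a - r := by rw [hrdef]; ring
  rw [hsr]
  field_simp
  ring

lemma Hf_two_pi (a : ℝ) : Hf a (2*Real.pi) = 2*Real.pi := by
  simp [Hf, Real.sin_two_pi, Real.cos_two_pi]

lemma Hf_zero (a : ℝ) : Hf a 0 = 0 := by
  simp [Hf]

lemma integral_eval (a : ℝ) (ha : 1 < a) (c : ℝ) (hc : 0 < c) (u v : ℝ) :
    ∫ x in u..v, 1/(a - Real.cos (c*x)) =
      (1/(c*Real.sqrt (a^2-1))) * (Hf a (c*v) - Hf a (c*u)) := by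
  set s := Real.sqrt (a^2-1) with hs
  have hspos : 0 < s := Real.sqrt_pos.2 (by nlinarith)
  have hden : ∀ x : ℝ, 0 < a - Real.cos (c*x) := fun x => by
    nlinarith [Real.cos_le_one (c*x)]
  have hderiv : ∀ x ∈ Set.uIcc u v, HasDerivAt (fun x => (1/(c*s)) * Hf a (c*x))
      (1/(a - Real.cos (c*x))) x := by
    intro x _
    have h1 : HasDerivAt (fun x : ℝ => c*x) c x := by
      simpa using (hasDerivAt_id x).const_mul c
    have h2 := (hasDerivAt_poisson a ha (c*x)).comp x h1
    have h3 := h2.const_mul (1/(c*s))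
    have heq : (1/(c*s)) * (Real.sqrt (a^2-1)/(a - Real.cos (c*x)) * c)
        = 1/(a - Real.cos (c*x)) := by
      rw [← hs]
      field_simp [hspos.ne', hc.ne', (hden x).ne']
    rw [heq] at h3
    simpa [Function.comp] using h3
  rw [intervalIntegral.integral_eq_sub_of_hasDerivAt hderiv]
  · ring
  · apply Continuous.intervalIntegrable
    apply continuous_const.div
    · continuity
    · exact fun x => (hden x).ne'

lemma inner_sum_le (M : ℕ) (hM : 2 ≤ M) (A : ℝ) (hA : 2 < A) :
    ∑ j ∈ Finset.Icc 1 (M-1), 1/(A - 2 * Real.cos (2 * Real.pi * j / M))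
      ≤ M / Real.sqrt (A^2 - 4) := by
  have hMpos : (0:ℝ) < M := by positivity
  set c : ℝ := 2 * Real.pi / M with hc
  have hcpos : 0 < c := by positivity
  set a : ℝ := A / 2 with ha
  have ha1 : 1 < a := by simp only [ha]; linarith
  set s := Real.sqrt (a^2-1) with hs
  have hspos : 0 < s := Real.sqrt_pos.2 (by nlinarith)
  set f : ℝ → ℝ := fun x => 1/(A - 2 * Real.cos (2 * Real.pi * x / M)) with hf
  have hdenpos : ∀ x : ℝ, 0 < a - Real.cos (c*x) := fun x => by
    nlinarith [Real.cos_le_one (c*x)]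
  have hfg : ∀ x : ℝ, f x = (1/2) * (1/(a - Real.cos (c*x))) := by
    intro x
    have hrw : A - 2 * Real.cos (2 * Real.pi * x / M) = 2 * (a - Real.cos (c*x)) := by
      simp only [ha, hc]; ring_nf
    show 1/(A - 2 * Real.cos (2 * Real.pi * x / M)) = (1/2) * (1/(a - Real.cos (c*x)))
    rw [hrw]
    have := (hdenpos x).ne'
    field_simp
  have hfpos : ∀ x : ℝ, 0 < f x := fun x => by
    rw [hfg]; exact mul_pos (by norm_num) (one_div_pos.2 (hdenpos x))
  have hint : ∀ u v : ℝ, ∫ x in u..v, f x = (1/(2*c*s)) * (Hf a (c*v) - Hf a (c*u)) := by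
    intro u v
    have h0 : ∫ x in u..v, f x = (1/2) * ∫ x in u..v, 1/(a - Real.cos (c*x)) := by
      rw [← intervalIntegral.integral_const_mul]
      exact intervalIntegral.integral_congr (fun x _ => hfg x)
    rw [h0, integral_eval a ha1 c hcpos u v]
    ring
  set m := M / 2 with hm
  have hcast_m : ((m:ℕ):ℝ) ≤ (M:ℝ)/2 := by
    have : ((m:ℕ):ℝ) ≤ (M:ℝ)/((2:ℕ):ℝ) := Nat.cast_div_le
    simpa using this
  have hcast_m1 : (M:ℝ)/2 ≤ ((m:ℕ):ℝ) + 1 := by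
    have h2 : M < 2*(M/2) + 2 := by omega
    have := (Nat.cast_lt (α := ℝ)).2 h2
    push_cast at this
    rw [hm]
    push_cast
    linarith
  -- antitone on [0, m]
  have hanti : AntitoneOn f (Set.Icc ((0:ℕ):ℝ) ((m:ℕ):ℝ)) := by
    intro x hx y hy hxy
    simp only [Set.mem_Icc, Nat.cast_zero] at hx hy
    have hy2 : y ≤ (M:ℝ)/2 := le_trans hy.2 hcast_m
    have hcos : Real.cos (c*y) ≤ Real.cos (c*x) := by
      apply Real.cos_le_cos_of_nonneg_of_le_pi
      · exact mul_nonneg hcpos.le hx.1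
      · rw [hc, div_mul_eq_mul_div, div_le_iff₀ hMpos]
        nlinarith [Real.pi_pos]
      · exact mul_le_mul_of_nonneg_left hxy (le_of_lt hcpos)
    rw [hfg x, hfg y]
    have h1 := hdenpos x
    have h2 := hdenpos y
    gcongr
  -- monotone on [m+1, M]
  have hmono : MonotoneOn f (Set.Icc (((m+1:ℕ)):ℝ) ((M:ℕ):ℝ)) := by
    intro x hx y hy hxy
    simp only [Set.mem_Icc] at hx hy
    have hx1 : (M:ℝ)/2 ≤ x := le_trans (by push_cast at hcast_m1 ⊢; linarith) hx.1
    have hcos : Real.cos (c*x) ≤ Real.cos (c*y) := by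
      rw [← Real.cos_two_pi_sub (c*x), ← Real.cos_two_pi_sub (c*y)]
      apply Real.cos_le_cos_of_nonneg_of_le_pi
      · have : c * y ≤ 2*Real.pi := by
          rw [hc, div_mul_eq_mul_div, div_le_iff₀ hMpos]
          nlinarith [Real.pi_pos, hy.2]
        linarith
      · have : Real.pi ≤ c * x := by
          rw [hc, div_mul_eq_mul_div, le_div_iff₀ hMpos]
          nlinarith [Real.pi_pos]
        linarith
      · have := mul_le_mul_of_nonneg_left hxy (le_of_lt hcpos)
        linarith
    rw [hfg x, hfg y]
    have h1 := hdenpos x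
    have h2 := hdenpos y
    gcongr
  -- split the sum
  have hsplit : ∑ j ∈ Finset.Icc 1 (M-1), f (j:ℝ)
      = (∑ j ∈ Finset.Ico 1 (m+1), f (j:ℝ)) + ∑ j ∈ Finset.Ico (m+1) M, f (j:ℝ) := by
    rw [Finset.sum_Ico_consecutive _ (by omega : 1 ≤ m+1) (by omega : m+1 ≤ M)]
    rw [← Finset.Ico_add_one_right_eq_Icc]
    congr 1
    try omega
  have hpartA : ∑ j ∈ Finset.Ico 1 (m+1), f (j:ℝ) ≤ ∫ x in (0:ℝ)..((m:ℕ):ℝ), f x := by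
    have h := AntitoneOn.sum_le_integral_Ico (Nat.zero_le m) hanti
    have heq : ∑ j ∈ Finset.Ico 1 (m+1), f (j:ℝ) = ∑ i ∈ Finset.Ico 0 m, f ((i+1 : ℕ):ℝ) := by
      rw [Finset.sum_Ico_eq_sum_range, Finset.sum_Ico_eq_sum_range]
      apply Finset.sum_congr (by norm_num) (fun i _ => by norm_num [add_comm])
    rw [heq]
    simpa using h
  have hpartB : ∑ j ∈ Finset.Ico (m+1) M, f (j:ℝ)
      ≤ ∫ x in (((m+1:ℕ)):ℝ)..((M:ℕ):ℝ), f x := by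
    exact MonotoneOn.sum_le_integral_Ico (by omega) hmono
  -- evaluate / bound integrals
  have hcM : c * (M:ℝ) = 2*Real.pi := by
    rw [hc]; field_simp
  have hIA : ∫ x in (0:ℝ)..((m:ℕ):ℝ), f x
      = (1/(2*c*s)) * (Hf a (c*(m:ℕ)) - 0) := by
    rw [hint]
    simp [Hf_zero]
  have hIB : ∫ x in (((m+1:ℕ)):ℝ)..((M:ℕ):ℝ), f x
      = (1/(2*c*s)) * (2*Real.pi - Hf a (c*((m+1:ℕ):ℝ))) := by
    rw [hint, hcM, Hf_two_pi]
  have hImid : 0 ≤ (1/(2*c*s)) * (Hf a (c*((m+1:ℕ):ℝ)) - Hf a (c*(m:ℕ))) := by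
    rw [← hint]
    apply intervalIntegral.integral_nonneg (by push_cast; linarith) (fun x _ => (hfpos x).le)
  have hsqrt : Real.sqrt (A^2 - 4) = 2*s := by
    rw [hs, ha]
    rw [show A^2 - 4 = 4*((A/2)^2 - 1) by ring]
    rw [show (4:ℝ) = 2^2 by norm_num, Real.sqrt_mul (by positivity), Real.sqrt_sq (by norm_num)]
  calc ∑ j ∈ Finset.Icc 1 (M-1), f (j:ℝ)
      ≤ (1/(2*c*s)) * (Hf a (c*(m:ℕ)) - 0) + (1/(2*c*s)) * (2*Real.pi - Hf a (c*((m+1:ℕ):ℝ))) := by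
        rw [hsplit]
        exact add_le_add (hIA ▸ hpartA) (hIB ▸ hpartB)
    _ ≤ (1/(2*c*s)) * (2*Real.pi) := by nlinarith [hImid]
    _ = (M:ℝ) / Real.sqrt (A^2 - 4) := by
        rw [hsqrt, hc]
        field_simp


lemma csc_antideriv (M : ℕ) (hMpos : (0:ℝ) < M) (x : ℝ) (hx0 : 0 < x) (hxM : x < M) :
    HasDerivAt (fun y => ((M:ℝ)/Real.pi) * Real.log (Real.tan (Real.pi * y / (2*M))))
      (1 / Real.sin (Real.pi * x / M)) x := by
  have hpi := Real.pi_pos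
  set u := Real.pi * x / (2*M) with hu
  have hu0 : 0 < u := by positivity
  have hu2 : u < Real.pi/2 := by
    rw [hu, div_lt_div_iff₀ (by positivity) (by norm_num)]
    nlinarith
  have hcos : 0 < Real.cos u := Real.cos_pos_of_mem_Ioo ⟨by linarith, hu2⟩
  have hsin : 0 < Real.sin u := Real.sin_pos_of_pos_of_lt_pi hu0 (by linarith)
  have htan : 0 < Real.tan u := by
    rw [Real.tan_eq_sin_div_cos]; positivity
  have h1 : HasDerivAt (fun y : ℝ => Real.pi * y / (2*M)) (Real.pi/(2*M)) x := by
    simpa using ((hasDerivAt_id x).const_mul Real.pi).div_const (2*M)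
  have h2 := (Real.hasDerivAt_tan hcos.ne').comp x h1
  have h3 := (h2.log htan.ne')
  have h4 := h3.const_mul ((M:ℝ)/Real.pi)
  have hdouble : Real.pi * x / M = 2 * u := by
    rw [hu]; field_simp
  have heq : ((M:ℝ)/Real.pi) * ((1 / Real.cos u ^ 2 * (Real.pi/(2*M))) / Real.tan u)
      = 1 / Real.sin (Real.pi * x / M) := by
    rw [hdouble, Real.sin_two_mul, Real.tan_eq_sin_div_cos]
    field_simp
  simp only [Function.comp] at h4
  rw [← hu] at h4
  rw [heq] at h4
  exact h4

set_option maxHeartbeats 1000000 in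
lemma csc_sum_le (M : ℕ) (hM : 4 ≤ M) :
    ∑ i ∈ Finset.Icc 1 (M-1), 1 / Real.sin (Real.pi * i / M)
      ≤ (2*M/Real.pi) * Real.log (2*M/Real.pi) + (10/13)*M := by
  have hpi := Real.pi_pos
  have hMpos : (0:ℝ) < M := by positivity
  have hM4 : (4:ℝ) ≤ M := by exact_mod_cast hM
  set g : ℝ → ℝ := fun x => 1 / Real.sin (Real.pi * x / M) with hg
  set m := M / 2 with hm
  have hm2 : 2 ≤ m := by omega
  have hm1M : m + 1 ≤ M - 1 := by omega
  have hcast_m : ((m:ℕ):ℝ) ≤ (M:ℝ)/2 := by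
    have : ((m:ℕ):ℝ) ≤ (M:ℝ)/((2:ℕ):ℝ) := Nat.cast_div_le
    simpa using this
  have hcast_m1 : (M:ℝ)/2 ≤ ((m:ℕ):ℝ) + 1 := by
    have h2 : M < 2*(M/2) + 2 := by omega
    have := (Nat.cast_lt (α := ℝ)).2 h2
    push_cast at this
    rw [hm]
    linarith
  -- sin positivity on (0, M)
  have hsinpos : ∀ x : ℝ, 0 < x → x < M → 0 < Real.sin (Real.pi * x / M) := by
    intro x h0 h1
    apply Real.sin_pos_of_pos_of_lt_pi
    · positivity
    · rw [div_lt_iff₀ hMpos]; nlinarith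
  have hgpos : ∀ x : ℝ, 0 < x → x < M → 0 < g x := fun x h0 h1 =>
    one_div_pos.2 (hsinpos x h0 h1)
  -- FTC on subintervals of (0, M)
  have hFTC : ∀ u v : ℝ, 0 < u → u ≤ v → v < M →
      ∫ x in u..v, g x = ((M:ℝ)/Real.pi) * Real.log (Real.tan (Real.pi * v / (2*M)))
        - ((M:ℝ)/Real.pi) * Real.log (Real.tan (Real.pi * u / (2*M))) := by
    intro u v hu huv hv
    apply intervalIntegral.integral_eq_sub_of_hasDerivAt
    · intro x hx
      rw [Set.uIcc_of_le huv] at hx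
      exact csc_antideriv M hMpos x (lt_of_lt_of_le hu hx.1) (lt_of_le_of_lt hx.2 hv)
    · apply ContinuousOn.intervalIntegrable
      apply ContinuousOn.div continuousOn_const
      · exact (Real.continuous_sin.comp (by continuity)).continuousOn
      · intro x hx
        rw [Set.uIcc_of_le huv] at hx
        exact (hsinpos x (lt_of_lt_of_le hu hx.1) (lt_of_le_of_lt hx.2 hv)).ne'
  -- key log bounds
  have htan_lb : Real.pi/(2*M) < Real.tan (Real.pi/(2*M)) := by
    apply Real.lt_tan (by positivity)
    rw [div_lt_div_iff₀ (by positivity) (by norm_num)]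
    nlinarith [hM4]
  have htanpos : 0 < Real.tan (Real.pi/(2*M)) := lt_trans (by positivity) htan_lb
  have hlog1 : -Real.log (Real.tan (Real.pi/(2*M))) ≤ Real.log (2*M/Real.pi) := by
    rw [← Real.log_inv]
    apply Real.log_le_log (by positivity)
    rw [inv_le_comm₀ htanpos (by positivity)]
    calc (2*(M:ℝ)/Real.pi)⁻¹ = Real.pi/(2*M) := by field_simp
      _ ≤ Real.tan (Real.pi/(2*M)) := htan_lb.le
  -- tan monotonicity helper
  have htan_mono := Real.strictMonoOn_tan.monotoneOn
  have hquarter_mem : Real.pi/4 ∈ Set.Ioo (-(Real.pi/2)) (Real.pi/2) := by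
    constructor <;> nlinarith
  -- endpoint bound: 13/(5M) <= sin(pi/M)
  have hsin1 : (13:ℝ)/(5*M) ≤ Real.sin (Real.pi/M) := by
    have hx0 : 0 < Real.pi/M := by positivity
    have hx1 : Real.pi/M ≤ 1 := by
      rw [div_le_one hMpos]; nlinarith [Real.pi_lt_d2]
    have hcube : Real.pi/M - (Real.pi/M)^3/4 < Real.sin (Real.pi/M) := by
      have := Real.sin_gt_sub_cube hx0; nlinarith [pow_pos hx0 3]
    have hpi2 : Real.pi < 3.15 := Real.pi_lt_d2
    have hpi1 : 3.14 < Real.pi := Real.pi_gt_d2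
    have hMsq : (16:ℝ) ≤ (M:ℝ)^2 := by nlinarith
    have hM3 : 16*(M:ℝ) ≤ (M:ℝ)^3 := by
      nlinarith [mul_le_mul_of_nonneg_left hMsq (le_of_lt hMpos)]
    have hcube_bound : (Real.pi/M)^3/4 ≤ Real.pi^3/(64*M) := by
      rw [div_pow, div_div, div_le_div_iff₀ (by positivity) (by positivity)]
      nlinarith [mul_le_mul_of_nonneg_left hM3 (le_of_lt (pow_pos hpi 3))]
    have hsq : Real.pi^2 < (9.9225:ℝ) := by nlinarith
    have h3 : Real.pi^3 < 31.3 := by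
      nlinarith [mul_lt_mul_of_pos_left hpi2 (by positivity : (0:ℝ) < Real.pi^2)]
    have h4 : (13:ℝ)/5 ≤ Real.pi - Real.pi^3/64 := by nlinarith
    have h2 : Real.pi/M - Real.pi^3/(64*M) = (Real.pi - Real.pi^3/64)/M := by
      field_simp
    have hkey : (13:ℝ)/(5*M) ≤ Real.pi/M - (Real.pi/M)^3/4 := by
      calc (13:ℝ)/(5*M) = (13/5)/M := by ring
        _ ≤ (Real.pi - Real.pi^3/64)/M := by gcongr
        _ = Real.pi/M - Real.pi^3/(64*M) := h2.symm
        _ ≤ Real.pi/M - (Real.pi/M)^3/4 := by linarith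
    linarith
  have hsin1pos : 0 < Real.sin (Real.pi/M) := lt_of_lt_of_le (by positivity) hsin1
  have hendpt : 1 / Real.sin (Real.pi/M) ≤ 5*(M:ℝ)/13 := by
    rw [div_le_div_iff₀ hsin1pos (by norm_num)]
    have hq : (13:ℝ)/(5*M) * (5*M) = 13 := by field_simp
    nlinarith [mul_le_mul_of_nonneg_right hsin1 (show (0:ℝ) ≤ 5*M by positivity)]
  have hg1 : g ((1:ℕ):ℝ) ≤ 5*(M:ℝ)/13 := by
    have he : g ((1:ℕ):ℝ) = 1 / Real.sin (Real.pi/M) := by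
      rw [hg]; norm_num
    rw [he]; exact hendpt
  have hcastM1 : ((M-1:ℕ):ℝ) = (M:ℝ) - 1 := by
    rw [Nat.cast_sub (by omega)]; norm_num
  have hgM1 : g ((M-1:ℕ):ℝ) ≤ 5*(M:ℝ)/13 := by
    have harg : Real.pi * ((M:ℝ)-1) / M = Real.pi - Real.pi/M := by
      field_simp
    have he : g ((M-1:ℕ):ℝ) = 1 / Real.sin (Real.pi/M) := by
      rw [hg]
      simp only [hcastM1, harg, Real.sin_pi_sub]
    rw [he]; exact hendpt
  -- antitone on [1, m]
  have hanti : AntitoneOn g (Set.Icc ((1:ℕ):ℝ) ((m:ℕ):ℝ)) := by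
    intro x hx y hy hxy
    simp only [Set.mem_Icc, Nat.cast_one] at hx hy
    have hx0 : (0:ℝ) < x := by linarith [hx.1]
    have hyM : y < (M:ℝ) := by linarith [hy.2, hcast_m]
    have hsx := hsinpos x hx0 (by linarith [hx.2, hy.2, hcast_m])
    have hsy := hsinpos y (by linarith [hy.1]) hyM
    have hmono : Real.sin (Real.pi * x / M) ≤ Real.sin (Real.pi * y / M) := by
      apply Real.strictMonoOn_sin.monotoneOn
      · constructor
        · have : 0 ≤ Real.pi * x / M := div_nonneg (mul_nonneg hpi.le (by linarith [hx.1])) hMpos.le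
          linarith
        · rw [div_le_div_iff₀ hMpos (by norm_num : (0:ℝ) < 2)]
          nlinarith [hx.2, hxy, hcast_m]
      · constructor
        · have : 0 ≤ Real.pi * y / M := div_nonneg (mul_nonneg hpi.le (by linarith [hy.1])) hMpos.le
          linarith
        · rw [div_le_div_iff₀ hMpos (by norm_num : (0:ℝ) < 2)]
          nlinarith [hy.2, hcast_m]
      · gcongr
    rw [hg]
    exact one_div_le_one_div_of_le hsx hmono
  -- monotone on [m+1, M-1]
  have hmonog : MonotoneOn g (Set.Icc (((m+1:ℕ)):ℝ) (((M-1:ℕ)):ℝ)) := by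
    intro x hx y hy hxy
    simp only [Set.mem_Icc] at hx hy
    have hcastm1 : ((m+1:ℕ):ℝ) = ((m:ℕ):ℝ) + 1 := by push_cast; ring
    have hx2 : (M:ℝ)/2 ≤ x := by
      rw [hcastm1] at hx
      linarith [hx.1, hcast_m1]
    have hyM : y ≤ (M:ℝ) - 1 := by
      rw [hcastM1] at hy
      exact hy.2
    have hx0 : (0:ℝ) < x := by linarith
    have hsx := hsinpos x hx0 (by linarith [hxy])
    have hsy := hsinpos y (by linarith) (by linarith)
    have hmono : Real.sin (Real.pi * y / M) ≤ Real.sin (Real.pi * x / M) := by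
      rw [← Real.sin_pi_sub (Real.pi * x / M), ← Real.sin_pi_sub (Real.pi * y / M)]
      apply Real.strictMonoOn_sin.monotoneOn
      · constructor
        · have : Real.pi * y / M ≤ Real.pi := by
            rw [div_le_iff₀ hMpos]; nlinarith
          linarith
        · have : Real.pi/2 ≤ Real.pi * y / M := by
            rw [le_div_iff₀ hMpos]; nlinarith [hx2, hxy]
          linarith
      · constructor
        · have : Real.pi * x / M ≤ Real.pi := by
            rw [div_le_iff₀ hMpos]; nlinarith
          linarith
        · have : Real.pi/2 ≤ Real.pi * x / M := by
            rw [le_div_iff₀ hMpos]; nlinarith [hx2]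
          linarith
      · have : Real.pi * x / M ≤ Real.pi * y / M := by gcongr
        linarith
    rw [hg]
    exact one_div_le_one_div_of_le hsy hmono
  -- split the sum
  have hsplit : ∑ i ∈ Finset.Icc 1 (M-1), g (i:ℝ)
      = g ((1:ℕ):ℝ) + ((∑ j ∈ Finset.Ico 2 (m+1), g (j:ℝ))
        + ((∑ j ∈ Finset.Ico (m+1) (M-1), g (j:ℝ)) + g ((M-1:ℕ):ℝ))) := by
    have e1 : Finset.Icc 1 (M-1) = Finset.Ico 1 M := by
      rw [← Finset.Ico_add_one_right_eq_Icc]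
      congr 1
      omega
    have e3 : Finset.Ico (M-1) M = {M-1} := by
      have hMe : M = (M-1)+1 := by omega
      rw [hMe]
      simp
    rw [e1]
    rw [← Finset.sum_Ico_consecutive _ (by omega : 1 ≤ 2) (by omega : 2 ≤ M)]
    rw [← Finset.sum_Ico_consecutive _ (by omega : 2 ≤ m+1) (by omega : m+1 ≤ M)]
    rw [← Finset.sum_Ico_consecutive _ (by omega : m+1 ≤ M-1) (by omega : M-1 ≤ M)]
    rw [e3]
    norm_num
  -- part C
  have hpartC : ∑ j ∈ Finset.Ico 2 (m+1), g (j:ℝ)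
      ≤ ∫ x in ((1:ℕ):ℝ)..((m:ℕ):ℝ), g x := by
    have h := AntitoneOn.sum_le_integral_Ico (by omega : 1 ≤ m) hanti
    have heq : ∑ j ∈ Finset.Ico 2 (m+1), g (j:ℝ) = ∑ i ∈ Finset.Ico 1 m, g ((i+1:ℕ):ℝ) := by
      rw [Finset.sum_Ico_eq_sum_range, Finset.sum_Ico_eq_sum_range]
      apply Finset.sum_congr (by congr 1) (fun i _ => by congr 1; push_cast; ring)
    rw [heq]
    exact h
  -- part D
  have hpartD : ∑ j ∈ Finset.Ico (m+1) (M-1), g (j:ℝ)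
      ≤ ∫ x in (((m+1:ℕ)):ℝ)..(((M-1:ℕ)):ℝ), g x :=
    MonotoneOn.sum_le_integral_Ico (by omega) hmonog
  -- evaluate integrals
  have hIC : ∫ x in ((1:ℕ):ℝ)..((m:ℕ):ℝ), g x
      = ((M:ℝ)/Real.pi) * Real.log (Real.tan (Real.pi * ((m:ℕ):ℝ) / (2*M)))
        - ((M:ℝ)/Real.pi) * Real.log (Real.tan (Real.pi * ((1:ℕ):ℝ) / (2*M))) := by
    apply hFTC
    · norm_num
    · exact Nat.cast_le.2 (by omega)
    · exact Nat.cast_lt.2 (by omega)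
  have hID : ∫ x in (((m+1:ℕ)):ℝ)..(((M-1:ℕ)):ℝ), g x
      = ((M:ℝ)/Real.pi) * Real.log (Real.tan (Real.pi * ((M-1:ℕ):ℝ) / (2*M)))
        - ((M:ℝ)/Real.pi) * Real.log (Real.tan (Real.pi * ((m+1:ℕ):ℝ) / (2*M))) := by
    apply hFTC
    · positivity
    · exact Nat.cast_le.2 (by omega)
    · exact Nat.cast_lt.2 (by omega)
  -- log bounds
  have hMpi : (0:ℝ) ≤ (M:ℝ)/Real.pi := by positivity
  have hL : (0:ℝ) < 2*(M:ℝ)/Real.pi := by positivity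
  have e1 : Real.pi * ((1:ℕ):ℝ)/(2*(M:ℝ)) = Real.pi/(2*M) := by norm_num
  have hlogC1 : Real.log (Real.tan (Real.pi * ((m:ℕ):ℝ) / (2*M))) ≤ 0 := by
    have hm0 : (0:ℝ) < Real.pi * ((m:ℕ):ℝ) / (2*M) := by
      have : (0:ℝ) < ((m:ℕ):ℝ) := by exact_mod_cast Nat.pos_of_ne_zero (by omega)
      positivity
    have hmq : Real.pi * ((m:ℕ):ℝ) / (2*M) ≤ Real.pi/4 := by
      rw [div_le_div_iff₀ (by positivity) (by norm_num)]
      nlinarith [hcast_m]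
    have hlt2 : Real.pi * ((m:ℕ):ℝ) / (2*M) < Real.pi/2 := lt_of_le_of_lt hmq (by linarith)
    have htpos : 0 < Real.tan (Real.pi * ((m:ℕ):ℝ) / (2*M)) :=
      Real.tan_pos_of_pos_of_lt_pi_div_two hm0 hlt2
    have hle1 : Real.tan (Real.pi * ((m:ℕ):ℝ) / (2*M)) ≤ 1 := by
      have := htan_mono (Set.mem_Ioo.2 ⟨by linarith, hlt2⟩) hquarter_mem hmq
      rwa [Real.tan_pi_div_four] at this
    exact Real.log_nonpos htpos.le hle1
  have hlogD1 : Real.log (Real.tan (Real.pi * ((M-1:ℕ):ℝ) / (2*M))) ≤ Real.log (2*(M:ℝ)/Real.pi) := by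
    have harg : Real.pi * ((M-1:ℕ):ℝ) / (2*M) = Real.pi/2 - Real.pi/(2*M) := by
      rw [hcastM1]
      field_simp
    rw [harg, Real.tan_pi_div_two_sub]
    apply Real.log_le_log (by positivity)
    rw [inv_le_comm₀ htanpos hL]
    calc (2*(M:ℝ)/Real.pi)⁻¹ = Real.pi/(2*M) := by field_simp
      _ ≤ Real.tan (Real.pi/(2*M)) := htan_lb.le
  have hlogD2 : 0 ≤ Real.log (Real.tan (Real.pi * ((m+1:ℕ):ℝ) / (2*M))) := by
    apply Real.log_nonneg
    have hmem : Real.pi * ((m+1:ℕ):ℝ) / (2*M) ∈ Set.Ioo (-(Real.pi/2)) (Real.pi/2) := by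
      constructor
      · have : (0:ℝ) < Real.pi * ((m+1:ℕ):ℝ) / (2*M) := by positivity
        linarith
      · rw [div_lt_div_iff₀ (by positivity) (by norm_num)]
        have hlt : ((m+1:ℕ):ℝ) < (M:ℝ) := Nat.cast_lt.2 (by omega)
        have h6 := mul_lt_mul_of_pos_left hlt (show (0:ℝ) < 2*Real.pi by positivity)
        linarith [h6]
    have hq : Real.pi/4 ≤ Real.pi * ((m+1:ℕ):ℝ) / (2*M) := by
      rw [div_le_div_iff₀ (by norm_num) (by positivity)]
      have hge : (M:ℝ)/2 ≤ ((m+1:ℕ):ℝ) := by push_cast; linarith [hcast_m1]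
      have h5 := mul_le_mul_of_nonneg_left hge (show (0:ℝ) ≤ 4*Real.pi by positivity)
      linarith [h5]
    have := htan_mono hquarter_mem hmem hq
    rwa [Real.tan_pi_div_four] at this
  -- combine
  have hC' : ∑ j ∈ Finset.Ico 2 (m+1), g (j:ℝ)
      ≤ ((M:ℝ)/Real.pi) * Real.log (2*(M:ℝ)/Real.pi) := by
    refine le_trans (hpartC.trans (le_of_eq hIC)) ?_
    rw [e1]
    have h1 := mul_le_mul_of_nonneg_left hlog1 hMpi
    have h2 := mul_le_mul_of_nonneg_left hlogC1 hMpi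
    linarith [h1, h2]
  have hD' : ∑ j ∈ Finset.Ico (m+1) (M-1), g (j:ℝ)
      ≤ ((M:ℝ)/Real.pi) * Real.log (2*(M:ℝ)/Real.pi) := by
    refine le_trans (hpartD.trans (le_of_eq hID)) ?_
    have h1 := mul_le_mul_of_nonneg_left hlogD1 hMpi
    have h2 := mul_le_mul_of_nonneg_left hlogD2 hMpi
    linarith [h1, h2]
  have hfin : (2*(M:ℝ)/Real.pi)*Real.log (2*(M:ℝ)/Real.pi)
      = 2*(((M:ℝ)/Real.pi)*Real.log (2*(M:ℝ)/Real.pi)) := by ring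
  rw [hsplit]
  linarith [hg1, hgM1, hC', hD']

theorem restricted_sum_upper (M1 M2 : ℕ) (h1 : 4 ≤ M1) (h12 : M1 ≤ M2) :
    RaveRing M1 M2 ≤ (1 / (2 * Real.pi)) * Real.log M2
      + (2 / Real.pi ^ 2) * ((M1 : ℝ) / M2) + 1 / 5 := by
  have hpi := Real.pi_pos
  have hM1pos : (0:ℝ) < M1 := Nat.cast_pos.2 (by omega)
  have hM2pos : (0:ℝ) < M2 := Nat.cast_pos.2 (by omega)
  rw [RaveRing]
  have hterm : ∀ i ∈ Finset.Icc 1 (M1-1),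
      (∑ j ∈ Finset.Icc 1 (M2-1), 1 / (4 - 2 * Real.cos (2 * Real.pi * i / M1)
        - 2 * Real.cos (2 * Real.pi * j / M2)))
      ≤ (M2:ℝ)/4 * (1 / Real.sin (Real.pi * i / M1)) := by
    intro i hi
    rw [Finset.mem_Icc] at hi
    set si := Real.sin (Real.pi * i / M1) with hsi
    have hiR1 : (1:ℝ) ≤ (i:ℝ) := Nat.one_le_cast.2 hi.1
    have hiRM : (i:ℝ) ≤ (M1:ℝ) - 1 := by
      have h := Nat.cast_le (α := ℝ) |>.2 hi.2
      rwa [Nat.cast_sub (by omega), Nat.cast_one] at h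
    have hipos : (0:ℝ) < i := by linarith
    have hangle1 : 0 < Real.pi * i / M1 := div_pos (mul_pos hpi hipos) hM1pos
    have hangle2 : Real.pi * i / M1 < Real.pi := by
      rw [div_lt_iff₀ hM1pos]
      nlinarith
    have hsipos : 0 < si := Real.sin_pos_of_pos_of_lt_pi hangle1 hangle2
    have hcos2 : Real.cos (2 * Real.pi * i / M1) = 1 - 2 * si^2 := by
      have h2x : 2 * Real.pi * i / M1 = 2 * (Real.pi * i / M1) := by ring
      rw [h2x, Real.cos_two_mul, hsi]
      have hpyth := Real.sin_sq_add_cos_sq (Real.pi * i / M1)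
      linarith
    set A := 4 - 2 * Real.cos (2 * Real.pi * i / M1) with hA
    have hA2 : 2 < A := by
      rw [hA, hcos2]
      nlinarith
    have hinner := inner_sum_le M2 (by omega) A hA2
    have hsqrt_ge : 4 * si ≤ Real.sqrt (A^2 - 4) := by
      have h16 : (4*si)^2 ≤ A^2 - 4 := by
        rw [hA, hcos2]
        nlinarith [sq_nonneg si, sq_nonneg (si^2)]
      calc 4*si = Real.sqrt ((4*si)^2) := (Real.sqrt_sq (by positivity)).symm
        _ ≤ Real.sqrt (A^2-4) := Real.sqrt_le_sqrt h16
    have hsqrtpos : 0 < Real.sqrt (A^2-4) := lt_of_lt_of_le (by positivity) hsqrt_ge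
    have hswap : (M2:ℝ)/4 * (1/si) = (M2:ℝ)/(4*si) := by ring
    calc (∑ j ∈ Finset.Icc 1 (M2-1), 1 / (A - 2 * Real.cos (2 * Real.pi * j / M2)))
        ≤ (M2:ℝ)/Real.sqrt (A^2-4) := hinner
      _ ≤ (M2:ℝ)/(4*si) := by
          apply div_le_div_of_nonneg_left hM2pos.le (by positivity) hsqrt_ge
      _ = (M2:ℝ)/4 * (1/si) := hswap.symm
  have hsum : (∑ i ∈ Finset.Icc 1 (M1-1), ∑ j ∈ Finset.Icc 1 (M2-1),
      1 / (4 - 2 * Real.cos (2 * Real.pi * i / M1) - 2 * Real.cos (2 * Real.pi * j / M2)))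
      ≤ (M2:ℝ)/4 * ∑ i ∈ Finset.Icc 1 (M1-1), 1 / Real.sin (Real.pi * i / M1) := by
    rw [Finset.mul_sum]
    exact Finset.sum_le_sum hterm
  have hcsc := csc_sum_le M1 h1
  set L := Real.log (2*(M1:ℝ)/Real.pi) with hL
  have hS : (∑ i ∈ Finset.Icc 1 (M1-1), ∑ j ∈ Finset.Icc 1 (M2-1),
      1 / (4 - 2 * Real.cos (2 * Real.pi * i / M1) - 2 * Real.cos (2 * Real.pi * j / M2)))
      ≤ (M2:ℝ)/4 * ((2*M1/Real.pi) * L + (10/13)*M1) :=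
    le_trans hsum (mul_le_mul_of_nonneg_left hcsc (by positivity))
  have hmul := mul_le_mul_of_nonneg_left hS
    (show (0:ℝ) ≤ 1/((M1:ℝ)*M2) by positivity)
  have hsimp : (1/((M1:ℝ)*M2)) * ((M2:ℝ)/4 * ((2*M1/Real.pi) * L + (10/13)*M1))
      = (1/(2*Real.pi))*L + 5/26 := by
    field_simp
    ring
  rw [hsimp] at hmul
  have hlogle : L ≤ Real.log M2 := by
    rw [hL]
    apply Real.log_le_log (by positivity)
    have h2M : 2*(M1:ℝ)/Real.pi ≤ (M1:ℝ) := by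
      rw [div_le_iff₀ hpi]
      nlinarith [Real.pi_gt_three]
    have hc : (M1:ℝ) ≤ M2 := Nat.cast_le.2 h12
    linarith
  have hLmul := mul_le_mul_of_nonneg_left hlogle
    (show (0:ℝ) ≤ 1/(2*Real.pi) by positivity)
  have hextra : 0 ≤ (2/Real.pi^2) * ((M1:ℝ)/M2) := by positivity
  linarith [hmul, hLmul, hextra]
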